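/- The level set f⁻¹({y}) for y = Σ_{n odd} 0·2^{-n} + Σ_{n even} 2^{-n} (i.e. y with binary expansion 0101…, y = 1/3) has the cardinality of the continuum: it equals the set of numbers with s-adic expansion (αₙ) satisfying α₁ ∈ A₀ and α_{n+1} ≠ αₙ for all n. -/

import Mathlib

open Set Filter

/-- Value of an `s`-adic code `α`: `∑ αₙ / sⁿ⁺¹`. -/
noncomputable def sval (s : ℕ) (α : ℕ → ℕ) : ℝ := ∑' n, (α n : ℝ) / (s : ℝ) ^ (n + 1)

/-- `α` is a sequence of digits in `{0, …, s−1}`. -/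
def isDigits (s : ℕ) (α : ℕ → ℕ) : Prop := ∀ n, α n < s

/-- The `s`-adic cylinder of rank `m` with base `c₀ … c_{m−1}`. -/
def cylinder (s m : ℕ) (c : ℕ → ℕ) : Set ℝ :=
  {x | ∃ α : ℕ → ℕ, isDigits s α ∧ (∀ i < m, α i = c i) ∧ x = sval s α}

/-- The sequence of output binary digits `βₙ`. -/
def betaSeq (A1 : Finset ℕ) (α : ℕ → ℕ) : ℕ → ℕ
  | 0 => if α 0 ∈ A1 then 1 else 0
  | n + 1 => if α (n + 1) = α n then betaSeq A1 α n else 1 - betaSeq A1 α n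



noncomputable def tailS (b : ℕ) (α : ℕ → ℕ) (N : ℕ) : ℝ :=
  ∑' n, (α (n + N) : ℝ) / (b : ℝ) ^ (n + 1)

lemma summable_tail {b : ℕ} (hb : 1 < b) (α : ℕ → ℕ) (hα : isDigits b α) (N : ℕ) :
    Summable (fun n => (α (n + N) : ℝ) / (b : ℝ) ^ (n + 1)) := by
  have hb1 : (1:ℝ) < b := by exact_mod_cast hb
  have hb0 : (0:ℝ) < b := by linarith
  have hg : Summable (fun n : ℕ => ((1:ℝ)/b)^n) :=
    summable_geometric_of_lt_one (by positivity) (by rw [div_lt_one hb0]; linarith)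
  refine Summable.of_nonneg_of_le (fun n => by positivity) (fun n => ?_) hg
  have h1 : (α (n + N) : ℝ) ≤ b := by exact_mod_cast (hα (n + N)).le
  have hpn : (0:ℝ) < (b:ℝ)^n := pow_pos hb0 n
  rw [div_pow, one_pow, div_le_div_iff₀ (by positivity) hpn, pow_succ]
  nlinarith

lemma sval_eq_tail (b : ℕ) (α : ℕ → ℕ) : sval b α = tailS b α 0 := by
  simp [sval, tailS]

lemma tail_nonneg (b : ℕ) (α : ℕ → ℕ) (N : ℕ) : 0 ≤ tailS b α N :=
  tsum_nonneg (fun n => by positivity)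

lemma geom_term (b : ℕ) (hb : 1 < b) (n : ℕ) :
    ((b:ℝ) - 1) / (b : ℝ) ^ (n + 1) = (((b:ℝ)-1)/b) * (1/b)^n := by
  rw [div_pow, one_pow, div_mul_div_comm, mul_one, ← pow_succ']

lemma tsum_geom_div (b : ℕ) (hb : 1 < b) :
    ∑' n : ℕ, ((b:ℝ) - 1) / (b : ℝ) ^ (n + 1) = 1 := by
  have hb1 : (1:ℝ) < b := by exact_mod_cast hb
  have hb0 : (0:ℝ) < b := by linarith
  rw [tsum_congr (geom_term b hb), tsum_mul_left, tsum_geometric_of_lt_one (by positivity)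
    (by rw [div_lt_one hb0]; linarith)]
  have h2 : (1 - (b:ℝ)⁻¹) = ((b:ℝ)-1)/b := by
    rw [eq_div_iff (ne_of_gt hb0), sub_mul, one_mul, inv_mul_cancel₀ (ne_of_gt hb0)]
  rw [one_div, h2, mul_inv_cancel₀ (div_ne_zero (by linarith) (by linarith))]

lemma digit_le {b : ℕ} (hb : 1 < b) {α : ℕ → ℕ} (hα : isDigits b α) (m : ℕ) :
    (α m : ℝ) ≤ (b:ℝ) - 1 := by
  have h := Nat.le_sub_one_of_lt (hα m)
  have : (α m : ℝ) ≤ ((b-1 : ℕ) : ℝ) := by exact_mod_cast h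
  rwa [Nat.cast_sub hb.le, Nat.cast_one] at this

lemma tail_le_one {b : ℕ} (hb : 1 < b) (α : ℕ → ℕ) (hα : isDigits b α) (N : ℕ) :
    tailS b α N ≤ 1 := by
  have hb1 : (1:ℝ) < b := by exact_mod_cast hb
  have hb0 : (0:ℝ) < b := by linarith
  rw [← tsum_geom_div b hb]
  refine Summable.tsum_le_tsum (fun n => ?_) (summable_tail hb α hα N) ?_
  · exact div_le_div_of_nonneg_right (digit_le hb hα (n+N)) (by positivity) |>.trans_eq rfl
  · have : Summable (fun n : ℕ => (((b:ℝ)-1)/b) * (1/b)^n) :=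
      (summable_geometric_of_lt_one (by positivity) (by rw [div_lt_one hb0]; linarith)).mul_left _
    exact this.congr (fun n => (geom_term b hb n).symm)

lemma tail_rec {b : ℕ} (hb : 1 < b) (α : ℕ → ℕ) (hα : isDigits b α) (N : ℕ) :
    tailS b α N = (α N : ℝ) / b + tailS b α (N + 1) / b := by
  have hb0 : (0:ℝ) < b := by exact_mod_cast Nat.zero_lt_of_lt hb
  have hsum := summable_tail hb α hα N
  unfold tailS
  rw [Summable.tsum_eq_zero_add hsum]
  congr 1
  · norm_num
  · rw [eq_div_iff (ne_of_gt hb0), ← tsum_mul_right]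
    refine tsum_congr (fun n => ?_)
    have h3 : n + 1 + N = n + (N + 1) := by ring
    rw [h3, pow_succ]
    field_simp

lemma tail_rec' {b : ℕ} (hb : 1 < b) (α : ℕ → ℕ) (hα : isDigits b α) (N : ℕ) :
    (b:ℝ) * tailS b α N = (α N : ℝ) + tailS b α (N + 1) := by
  have hb0 : (0:ℝ) < b := by exact_mod_cast Nat.zero_lt_of_lt hb
  have hrec := tail_rec hb α hα N
  rw [hrec]
  field_simp

lemma tail_eq_one_step {b : ℕ} (hb : 1 < b) (α : ℕ → ℕ) (hα : isDigits b α) (N : ℕ)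
    (h : tailS b α N = 1) : (α N : ℝ) = (b:ℝ) - 1 ∧ tailS b α (N+1) = 1 := by
  have hrec := tail_rec' hb α hα N
  rw [h, mul_one] at hrec
  have hle := tail_le_one hb α hα (N+1)
  have hge := tail_nonneg b α (N+1)
  have hd := digit_le hb hα N
  constructor
  · linarith
  · linarith

lemma tail_eq_zero_step {b : ℕ} (hb : 1 < b) (α : ℕ → ℕ) (hα : isDigits b α) (N : ℕ)
    (h : tailS b α N = 0) : (α N : ℝ) = 0 ∧ tailS b α (N+1) = 0 := by
  have hrec := tail_rec' hb α hα N
  rw [h, mul_zero] at hrec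
  have hge := tail_nonneg b α (N+1)
  have hd : (0:ℝ) ≤ (α N : ℝ) := Nat.cast_nonneg _
  constructor
  · linarith
  · linarith

/-- If two digit sequences agree below `N` and have the same value, their tails at `N` agree. -/
lemma tails_eq_of_prefix {b : ℕ} (hb : 1 < b) (α γ : ℕ → ℕ) (hα : isDigits b α)
    (hγ : isDigits b γ) (hv : sval b α = sval b γ) (N : ℕ) (hpre : ∀ i < N, α i = γ i) :
    tailS b α N = tailS b γ N := by
  have hb0 : (0:ℝ) < b := by exact_mod_cast Nat.zero_lt_of_lt hb
  induction N with
  | zero => rw [← sval_eq_tail, ← sval_eq_tail]; exact hv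
  | succ N ih =>
    have h1 : tailS b α N = tailS b γ N := ih (fun i hi => hpre i (Nat.lt_succ_of_lt hi))
    have h2 := tail_rec' hb α hα N
    have h3 := tail_rec' hb γ hγ N
    have h4 : α N = γ N := hpre N (Nat.lt_succ_self N)
    rw [h4] at h2
    rw [h1, h3] at h2
    linarith

lemma tail_one_all {b : ℕ} (hb : 1 < b) (α : ℕ → ℕ) (hα : isDigits b α) (N : ℕ)
    (h : tailS b α N = 1) : ∀ m, N ≤ m → (α m : ℝ) = (b:ℝ) - 1 := by
  have key : ∀ k, tailS b α (N + k) = 1 ∧ (α (N + k) : ℝ) = (b:ℝ) - 1 := by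
    intro k
    induction k with
    | zero => exact ⟨h, (tail_eq_one_step hb α hα N h).1⟩
    | succ k ih =>
      have h2 := (tail_eq_one_step hb α hα (N + k) ih.1).2
      have : N + (k+1) = (N + k) + 1 := by ring
      rw [this]
      exact ⟨h2, (tail_eq_one_step hb α hα ((N+k)+1) h2).1⟩
  intro m hm
  obtain ⟨k, rfl⟩ := Nat.exists_eq_add_of_le hm
  exact (key k).2

lemma tail_zero_all {b : ℕ} (hb : 1 < b) (α : ℕ → ℕ) (hα : isDigits b α) (N : ℕ)
    (h : tailS b α N = 0) : ∀ m, N ≤ m → (α m : ℝ) = 0 := by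
  have key : ∀ k, tailS b α (N + k) = 0 ∧ (α (N + k) : ℝ) = 0 := by
    intro k
    induction k with
    | zero => exact ⟨h, (tail_eq_zero_step hb α hα N h).1⟩
    | succ k ih =>
      have h2 := (tail_eq_zero_step hb α hα (N + k) ih.1).2
      have : N + (k+1) = (N + k) + 1 := by ring
      rw [this]
      exact ⟨h2, (tail_eq_zero_step hb α hα ((N+k)+1) h2).1⟩
  intro m hm
  obtain ⟨k, rfl⟩ := Nat.exists_eq_add_of_le hm
  exact (key k).2

/-- sval is injective on alternating digit sequences. -/
lemma sval_inj_alt {b : ℕ} (hb : 1 < b) (α γ : ℕ → ℕ) (hα : isDigits b α) (hγ : isDigits b γ)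
    (ha : ∀ n, α (n+1) ≠ α n) (hg : ∀ n, γ (n+1) ≠ γ n) (hv : sval b α = sval b γ) : α = γ := by
  by_contra hne
  have hex : ∃ N, α N ≠ γ N := by
    by_contra hc
    push_neg at hc
    exact hne (funext hc)
  classical
  set N := Nat.find hex with hN
  have hNd : α N ≠ γ N := Nat.find_spec hex
  have hpre : ∀ i < N, α i = γ i := fun i hi => by
    by_contra hc; exact Nat.find_min hex hi hc
  have htail : tailS b α N = tailS b γ N := tails_eq_of_prefix hb α γ hα hγ hv N hpre
  have h2 := tail_rec' hb α hα N
  have h3 := tail_rec' hb γ hγ N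
  rw [htail] at h2
  have hdiff : (α N : ℝ) - (γ N : ℝ) = tailS b γ (N+1) - tailS b α (N+1) := by linarith
  have hb0 : (0:ℝ) < b := by exact_mod_cast Nat.zero_lt_of_lt hb
  have hta0 := tail_nonneg b α (N+1)
  have hta1 := tail_le_one hb α hα (N+1)
  have htg0 := tail_nonneg b γ (N+1)
  have htg1 := tail_le_one hb γ hγ (N+1)
  rcases Nat.lt_or_ge (α N) (γ N) with hlt | hge
  · -- γ N ≥ α N + 1; so tailα - tailγ ≥ 1 forces tailα = 1
    have h1 : (α N : ℝ) + 1 ≤ (γ N : ℝ) := by exact_mod_cast hlt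
    have hta : tailS b α (N+1) = 1 := by linarith
    have e1 := tail_one_all hb α hα (N+1) hta (N+1) le_rfl
    have e2 := tail_one_all hb α hα (N+1) hta (N+2) (by omega)
    have : α (N+2) = α (N+1) := by
      have : (α (N+2) : ℝ) = (α (N+1) : ℝ) := by rw [e1, e2]
      exact_mod_cast this
    exact ha (N+1) this
  · have hlt : γ N < α N := lt_of_le_of_ne hge (fun h => hNd h.symm)
    have h1 : (γ N : ℝ) + 1 ≤ (α N : ℝ) := by exact_mod_cast hlt
    have htg : tailS b γ (N+1) = 1 := by linarith
    have e1 := tail_one_all hb γ hγ (N+1) htg (N+1) le_rfl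
    have e2 := tail_one_all hb γ hγ (N+1) htg (N+2) (by omega)
    have : γ (N+2) = γ (N+1) := by
      have : (γ (N+2) : ℝ) = (γ (N+1) : ℝ) := by rw [e1, e2]
      exact_mod_cast this
    exact hg (N+1) this

/-- tails of any binary expansion of 1/3 -/
lemma one_third_tails (β : ℕ → ℕ) (hβ : isDigits 2 β) (h : sval 2 β = 1/3) :
    ∀ N, tailS 2 β N = if N % 2 = 0 then 1/3 else 2/3 := by
  intro N
  induction N with
  | zero => simp [← sval_eq_tail, h]
  | succ N ih =>
    have hrec := tail_rec' (b := 2) one_lt_two β hβ N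
    have h0 := tail_nonneg 2 β (N+1)
    have h1 := tail_le_one (b := 2) one_lt_two β hβ (N+1)
    have hd := hβ N
    push_cast at hrec
    interval_cases hB : β N
    · rcases Nat.even_or_odd N with he | ho
      · have hN : N % 2 = 0 := Nat.even_iff.mp he
        rw [hN] at ih; simp at ih
        have hN1 : (N+1) % 2 = 1 := by omega
        rw [hN1]
        norm_num at hrec
        norm_num
        linarith
      · -- N odd, tail N = 2/3, β N = 0 impossible: tail(N+1) = 4/3 > 1
        have hN : N % 2 = 1 := Nat.odd_iff.mp ho
        rw [hN] at ih; simp at ih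
        norm_num at hrec
        exfalso
        linarith
    · rcases Nat.even_or_odd N with he | ho
      · have hN : N % 2 = 0 := Nat.even_iff.mp he
        rw [hN] at ih; simp at ih
        norm_num at hrec
        exfalso
        linarith
      · have hN : N % 2 = 1 := Nat.odd_iff.mp ho
        rw [hN] at ih; simp at ih
        have hN1 : (N+1) % 2 = 0 := by omega
        rw [hN1]
        norm_num at hrec
        norm_num
        linarith

lemma one_third_digits (β : ℕ → ℕ) (hβ : isDigits 2 β) (h : sval 2 β = 1/3) :
    ∀ N, β N = N % 2 := by
  intro N
  have hrec := tail_rec' (b := 2) one_lt_two β hβ N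
  have t1 := one_third_tails β hβ h N
  have t2 := one_third_tails β hβ h (N+1)
  rcases Nat.even_or_odd N with he | ho
  · have hN : N % 2 = 0 := Nat.even_iff.mp he
    have hN1 : (N+1) % 2 = 1 := by omega
    rw [hN] at t1; rw [hN1] at t2; simp at t1 t2
    rw [t1, t2] at hrec
    push_cast at hrec
    have : (β N : ℝ) = 0 := by linarith
    have : β N = 0 := by exact_mod_cast this
    omega
  · have hN : N % 2 = 1 := Nat.odd_iff.mp ho
    have hN1 : (N+1) % 2 = 0 := by omega
    rw [hN] at t1; rw [hN1] at t2; simp at t1 t2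
    rw [t1, t2] at hrec
    push_cast at hrec
    have : (β N : ℝ) = 1 := by linarith
    have : β N = 1 := by exact_mod_cast this
    omega

lemma sval_alt_one_third : sval 2 (fun n => n % 2) = 1/3 := by
  have hd : isDigits 2 (fun n => n % 2) := fun n => Nat.mod_lt n (by norm_num)
  have h0 := tail_rec' (b := 2) one_lt_two _ hd 0
  have h1 := tail_rec' (b := 2) one_lt_two _ hd 1
  have h2 : tailS 2 (fun n => n % 2) 2 = tailS 2 (fun n => n % 2) 0 := by
    unfold tailS
    exact tsum_congr (fun n => by norm_num [Nat.add_mod])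
  rw [h2] at h1
  simp only [Nat.zero_mod, Nat.one_mod, Nat.cast_zero, Nat.cast_one] at h0 h1
  rw [sval_eq_tail]
  push_cast at h0 h1
  linarith

lemma sval_const_top {s : ℕ} (hs : 1 < s) : sval s (fun _ => s - 1) = 1 := by
  rw [sval]
  rw [← tsum_geom_div s hs]
  refine tsum_congr (fun n => ?_)
  congr 1
  rw [Nat.cast_sub hs.le, Nat.cast_one]

lemma exists_expansion {s : ℕ} (hs : 1 < s) {x : ℝ} (hx : x ∈ Set.Icc (0:ℝ) 1) :
    ∃ α : ℕ → ℕ, isDigits s α ∧ x = sval s α := by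
  obtain ⟨hx0, hx1⟩ := hx
  have hs0 : (0:ℝ) < s := by exact_mod_cast Nat.zero_lt_of_lt hs
  have hs1 : (1:ℝ) < s := by exact_mod_cast hs
  rcases eq_or_lt_of_le hx1 with rfl | hxlt
  · exact ⟨fun _ => s - 1, fun n => Nat.sub_lt (by omega) one_pos, (sval_const_top hs).symm⟩
  · -- greedy expansion
    set d : ℕ → ℤ := fun n => ⌊x * (s:ℝ)^n⌋ with hd
    have hd0 : d 0 = 0 := by
      rw [hd]
      simp only [pow_zero, mul_one]
      exact Int.floor_eq_zero_iff.mpr (by constructor <;> assumption)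
    have hlow : ∀ n, (s:ℤ) * d n ≤ d (n+1) := by
      intro n
      rw [hd]
      simp only
      rw [Int.le_floor]
      push_cast
      have h1 : (d n : ℝ) ≤ x * (s:ℝ)^n := Int.floor_le _
      calc ((s:ℝ)) * (d n : ℝ) ≤ (s:ℝ) * (x * (s:ℝ)^n) := by
            apply mul_le_mul_of_nonneg_left h1 hs0.le
        _ = x * (s:ℝ)^(n+1) := by ring
    have hup : ∀ n, d (n+1) < (s:ℤ) * (d n + 1) := by
      intro n
      rw [hd]
      simp only
      rw [Int.floor_lt]
      push_cast
      have h1 : x * (s:ℝ)^n < (d n : ℝ) + 1 := Int.lt_floor_add_one _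
      calc x * (s:ℝ)^(n+1) = (s:ℝ) * (x * (s:ℝ)^n) := by ring
        _ < (s:ℝ) * ((d n : ℝ) + 1) := by apply mul_lt_mul_of_pos_left h1 hs0
    have hdnn : ∀ n, 0 ≤ d n := by
      intro n
      rw [hd]
      simp only
      positivity
    set α : ℕ → ℕ := fun n => (d (n+1) - s * d n).toNat with hα
    have hcast : ∀ n, (α n : ℤ) = d (n+1) - s * d n := by
      intro n
      rw [hα]
      simp only
      rw [Int.toNat_of_nonneg (by have := hlow n; omega)]
    have hdig : isDigits s α := by
      intro n
      have h4 : (α n : ℤ) < s := by rw [hcast n]; linarith [hup n]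
      exact_mod_cast h4
    refine ⟨α, hdig, ?_⟩
    have hsummable := summable_tail hs α hdig 0
    have hsummable' : Summable (fun n => (α n : ℝ) / (s:ℝ)^(n+1)) := by
      refine hsummable.congr (fun n => by norm_num)
    -- partial sums telescope
    have htel : ∀ N, ∑ n ∈ Finset.range N, (α n : ℝ) / (s:ℝ)^(n+1) = (d N : ℝ) / (s:ℝ)^N := by
      intro N
      have : ∀ n, (α n : ℝ) / (s:ℝ)^(n+1) =
          (d (n+1) : ℝ) / (s:ℝ)^(n+1) - (d n : ℝ) / (s:ℝ)^n := by
        intro n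
        have hc : (α n : ℝ) = (d (n+1) : ℝ) - (s:ℝ) * (d n : ℝ) := by
          exact_mod_cast congrArg (fun z : ℤ => (z:ℝ)) (hcast n)
        rw [hc, pow_succ]
        field_simp
      rw [Finset.sum_congr rfl (fun n _ => this n), Finset.sum_range_sub
        (fun n => (d n : ℝ) / (s:ℝ)^n)]
      rw [hd0]
      norm_num
    -- partial sums tend to x
    have hconv : Tendsto (fun N => ∑ n ∈ Finset.range N, (α n : ℝ) / (s:ℝ)^(n+1)) atTop (nhds x) := by
      simp only [htel]
      have hbound : ∀ N, |(d N : ℝ) / (s:ℝ)^N - x| ≤ ((1:ℝ)/s)^N := by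
        intro N
        have hpN : (0:ℝ) < (s:ℝ)^N := pow_pos hs0 N
        have h1 : (d N : ℝ) ≤ x * (s:ℝ)^N := Int.floor_le _
        have h2 : x * (s:ℝ)^N < (d N : ℝ) + 1 := Int.lt_floor_add_one _
        have e1 : ((1:ℝ)/s)^N = 1/(s:ℝ)^N := by rw [div_pow, one_pow]
        rw [e1, abs_le]
        have hx2 : x ≤ (d N : ℝ)/(s:ℝ)^N + 1/(s:ℝ)^N := by
          rw [← add_div, le_div_iff₀ hpN]
          linarith
        have hx3 : (d N : ℝ)/(s:ℝ)^N ≤ x := by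
          rw [div_le_iff₀ hpN]
          linarith
        have hp : (0:ℝ) ≤ 1/(s:ℝ)^N := by positivity
        constructor <;> linarith
      have hgeo : Tendsto (fun N : ℕ => ((1:ℝ)/s)^N) atTop (nhds 0) := by
        apply tendsto_pow_atTop_nhds_zero_of_lt_one (by positivity)
        rw [div_lt_one hs0]; linarith
      have : Tendsto (fun N => (d N : ℝ) / (s:ℝ)^N - x) atTop (nhds 0) := by
        apply squeeze_zero_norm hbound hgeo
      have := this.add_const x
      simpa using this
    have := (hsummable'.hasSum_iff_tendsto_nat).mpr hconv
    exact (this.tsum_eq).symm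


lemma betaSeq_digits (A1 : Finset ℕ) (α : ℕ → ℕ) : isDigits 2 (betaSeq A1 α) := by
  intro n
  induction n with
  | zero => rw [betaSeq]; split_ifs <;> omega
  | succ n ih => rw [betaSeq]; split_ifs <;> omega

lemma betaSeq_alt (A1 : Finset ℕ) (α : ℕ → ℕ) (h0 : α 0 ∉ A1) (hne : ∀ n, α (n+1) ≠ α n) :
    ∀ n, betaSeq A1 α n = n % 2 := by
  intro n
  induction n with
  | zero => rw [betaSeq]; simp [h0]
  | succ n ih =>
    rw [betaSeq, if_neg (hne n), ih]
    omega

/-- choose a digit in `{0,1,2}` different from `a`, in two distinct ways -/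
def pickD (a : ℕ) (t : Bool) : ℕ :=
  if t then (if a = 0 then 1 else 0) else (if a = 2 then 1 else 2)

lemma pickD_lt (a : ℕ) (t : Bool) : pickD a t < 3 := by
  rw [pickD]; split_ifs <;> omega

lemma pickD_ne (a : ℕ) (t : Bool) : pickD a t ≠ a := by
  rw [pickD]; split_ifs <;> omega

lemma pickD_inj (a : ℕ) {t u : Bool} (h : pickD a t = pickD a u) : t = u := by
  rcases t <;> rcases u <;> simp_all [pickD] <;> split_ifs at h <;> omega

/-- alternating sequence coded by a boolean sequence -/
def altSeq (a0 : ℕ) (g : ℕ → Bool) : ℕ → ℕ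
  | 0 => a0
  | n + 1 => pickD (altSeq a0 g n) (g n)

theorem f_level_one_third (s : ℕ) (hs : 2 < s) (A0 A1 : Finset ℕ)
    (hA : A0 ∪ A1 = Finset.range s) (hdisj : Disjoint A0 A1)
    (h0 : A0.Nonempty) (h1 : A1.Nonempty) (f : ℝ → ℝ)
    (hf : ∀ α : ℕ → ℕ, isDigits s α → f (sval s α) = sval 2 (betaSeq A1 α)) :
    {x ∈ Set.Icc (0 : ℝ) 1 | f x = 1 / 3} =
      {x : ℝ | ∃ α : ℕ → ℕ, isDigits s α ∧ α 0 ∈ A0 ∧ (∀ n, α (n + 1) ≠ α n) ∧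
        x = sval s α} ∧
    Cardinal.mk {x ∈ Set.Icc (0 : ℝ) 1 | f x = 1 / 3} = Cardinal.continuum := by
  have hs1 : 1 < s := by omega
  have hset : {x ∈ Set.Icc (0 : ℝ) 1 | f x = 1 / 3} =
      {x : ℝ | ∃ α : ℕ → ℕ, isDigits s α ∧ α 0 ∈ A0 ∧ (∀ n, α (n + 1) ≠ α n) ∧
        x = sval s α} := by
    ext x
    constructor
    · rintro ⟨hxI, hfx⟩
      obtain ⟨α, hα, hxe⟩ := exists_expansion hs1 hxI
      have hfa : sval 2 (betaSeq A1 α) = 1/3 := by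
        rw [← hf α hα, ← hxe]; exact hfx
      have hβ := one_third_digits _ (betaSeq_digits A1 α) hfa
      have hne : ∀ n, α (n + 1) ≠ α n := by
        intro n heq
        have e1 := hβ n
        have e2 := hβ (n+1)
        rw [betaSeq, if_pos heq, e1] at e2
        omega
      have hA0 : α 0 ∈ A0 := by
        have e0 := hβ 0
        rw [betaSeq] at e0
        have hnotA1 : α 0 ∉ A1 := by
          intro hmem; rw [if_pos hmem] at e0; omega
        have : α 0 ∈ A0 ∪ A1 := by
          rw [hA, Finset.mem_range]; exact hα 0
        rcases Finset.mem_union.mp this with h | h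
        · exact h
        · exact absurd h hnotA1
      exact ⟨α, hα, hA0, hne, hxe⟩
    · rintro ⟨α, hα, hA0, hne, rfl⟩
      have hnotA1 : α 0 ∉ A1 := fun hmem =>
        (Finset.disjoint_left.mp hdisj hA0) hmem
      refine ⟨⟨?_, ?_⟩, ?_⟩
      · rw [sval_eq_tail]; exact tail_nonneg s α 0
      · rw [sval_eq_tail]; exact tail_le_one hs1 α hα 0
      · rw [hf α hα]
        have : betaSeq A1 α = fun n => n % 2 := funext (betaSeq_alt A1 α hnotA1 hne)
        rw [this, sval_alt_one_third]
  refine ⟨hset, ?_⟩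
  rw [hset]
  apply le_antisymm
  · exact (Cardinal.mk_set_le _).trans_eq Cardinal.mk_real
  · -- build an injection from ℕ → Bool
    obtain ⟨a0, ha0⟩ := h0
    have ha0s : a0 < s := by
      have : a0 ∈ A0 ∪ A1 := Finset.mem_union_left _ ha0
      rw [hA, Finset.mem_range] at this; exact this
    have haltd : ∀ g : ℕ → Bool, isDigits s (altSeq a0 g) := by
      intro g n
      cases n with
      | zero => exact ha0s
      | succ n => exact lt_of_lt_of_le (pickD_lt _ _) (by omega)
    have haltne : ∀ g : ℕ → Bool, ∀ n, altSeq a0 g (n+1) ≠ altSeq a0 g n :=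
      fun g n => pickD_ne _ _
    have hmem : ∀ g : ℕ → Bool, sval s (altSeq a0 g) ∈
        {x : ℝ | ∃ α : ℕ → ℕ, isDigits s α ∧ α 0 ∈ A0 ∧ (∀ n, α (n + 1) ≠ α n) ∧
          x = sval s α} :=
      fun g => ⟨altSeq a0 g, haltd g, ha0, haltne g, rfl⟩
    set S := {x : ℝ | ∃ α : ℕ → ℕ, isDigits s α ∧ α 0 ∈ A0 ∧ (∀ n, α (n + 1) ≠ α n) ∧
          x = sval s α}
    have hinj : Function.Injective (fun g : ℕ → Bool => (⟨sval s (altSeq a0 g), hmem g⟩ : S)) := by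
      intro g g' h
      have hval : sval s (altSeq a0 g) = sval s (altSeq a0 g') := congrArg Subtype.val h
      have hseq : altSeq a0 g = altSeq a0 g' :=
        sval_inj_alt hs1 _ _ (haltd g) (haltd g') (haltne g) (haltne g') hval
      funext n
      have : altSeq a0 g (n+1) = altSeq a0 g' (n+1) := by rw [hseq]
      rw [altSeq, altSeq] at this
      have hn : altSeq a0 g n = altSeq a0 g' n := by rw [hseq]
      rw [← hn] at this
      exact pickD_inj _ this
    have hcard : Cardinal.continuum ≤ Cardinal.mk S := by
      have h2 : Cardinal.mk (ℕ → Bool) ≤ Cardinal.mk S := Cardinal.mk_le_of_injective hinj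
      have h3 : Cardinal.mk (ℕ → Bool) = Cardinal.continuum := by
        rw [← Cardinal.power_def, Cardinal.mk_bool, Cardinal.mk_nat,
          Cardinal.two_power_aleph0]
      rwa [h3] at h2
    exact hcard
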